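/- Let m, n ≥ 0, let λ ∈ Λ_{n+1} with λ ⊂ m^{n+1}, and let μ ∈ Λ_n with μ ⊂ m^n. Then there exists ν ∈ Λ_m with ν ⊂ (n^m − μ′) and ν ⊂ ((n+1)^m − λ′) such that (n^m − μ′)/ν and ((n+1)^m − λ′)/ν are vertical strips, if and only if there exists κ ∈ Λ_n such that (m^n − μ)/κ and (m^{n+1} − λ)/κ (with κ regarded as an element of Λ_{n+1}) are horizontal strips. -/

import Mathlib

open Finset

/-- `l` is a partition with at most `N` parts: `l 1 ≥ l 2 ≥ ⋯ ≥ l N (≥ 0)`. -/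
def IsPartition {N : ℕ} (l : Fin N → ℕ) : Prop :=
  ∀ i j : Fin N, i ≤ j → l j ≤ l i

/-- Containment of diagrams: `μ ⊂ l`. -/
def SubDiag {N : ℕ} (μ l : Fin N → ℕ) : Prop := ∀ j, μ j ≤ l j

/-- The weight `|l| = l 1 + ⋯ + l N`. -/
def wt {N : ℕ} (l : Fin N → ℕ) : ℕ := ∑ j, l j

/-- The skew diagram `l/μ` is a vertical strip: `μ j ≤ l j ≤ μ j + 1` for all `j`. -/
def VStrip {N : ℕ} (l μ : Fin N → ℕ) : Prop :=
  ∀ j, μ j ≤ l j ∧ l j ≤ μ j + 1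

/-- The skew diagram `l/μ` is a horizontal strip:
`l 1 ≥ μ 1 ≥ l 2 ≥ μ 2 ≥ ⋯ ≥ l N ≥ μ N` (interlacing). -/
def HStrip {N : ℕ} (l μ : Fin N → ℕ) : Prop :=
  (∀ j, μ j ≤ l j) ∧ ∀ (j : ℕ) (h : j + 1 < N), l ⟨j + 1, h⟩ ≤ μ ⟨j, by omega⟩

/-- `|l/μ| = |l| - |μ|` (for `μ ⊂ l`). -/
def skewWt {N : ℕ} (l μ : Fin N → ℕ) : ℕ := ∑ j, (l j - μ j)

/-- The proximity relation `μ ∼_r l`: there is a partition `ν ⊂ l, ν ⊂ μ` such that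
`l/ν` and `μ/ν` are vertical strips with `|l/ν| + |μ/ν| ≤ r`. -/
def simRel {N : ℕ} (r : ℕ) (μ l : Fin N → ℕ) : Prop :=
  ∃ ν : Fin N → ℕ, IsPartition ν ∧ SubDiag ν l ∧ SubDiag ν μ ∧
    VStrip l ν ∧ VStrip μ ν ∧ skewWt l ν + skewWt μ ν ≤ r

/-- `μ ⪯ l`: there is a partition `ν` with `μ ⊂ ν ⊂ l` such that `l/ν` and `ν/μ`
are horizontal strips. -/
def preceq {N : ℕ} (μ l : Fin N → ℕ) : Prop :=
  ∃ ν : Fin N → ℕ, IsPartition ν ∧ SubDiag μ ν ∧ SubDiag ν l ∧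
    HStrip l ν ∧ HStrip ν μ

/-- The conjugate partition `l′ ∈ Λ_m` (for `l ∈ Λ_N` with `l 1 ≤ m`):
`l′ i = #{j : l j ≥ i}` (here `i : Fin m` is 0-based, so `i+1`-th row). -/
def conjP {N : ℕ} (m : ℕ) (l : Fin N → ℕ) : Fin m → ℕ :=
  fun i => (Finset.univ.filter (fun j : Fin N => (i : ℕ) + 1 ≤ l j)).card

/-- The rectangular partition `m^N ∈ Λ_N`. -/
def rectP (m N : ℕ) : Fin N → ℕ := fun _ => m

/-- The complement `m^N − l` of `l ⊂ m^N` in `Λ_N`: `(m^N − l) j = m − l (N+1−j)`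
(1-based), i.e. `m - l j.rev` (0-based). -/
def complP {N : ℕ} (m : ℕ) (l : Fin N → ℕ) : Fin N → ℕ :=
  fun j => m - l j.rev

/-- The natural embedding `Λ_N ↪ Λ_{N+1}` by appending a zero part. -/
def extendP {N : ℕ} (l : Fin N → ℕ) : Fin (N + 1) → ℕ := Fin.snoc l 0

lemma card_filter_val_lt (m c : ℕ) (h : c ≤ m) :
    (univ.filter fun i : Fin m => (i : ℕ) < c).card = c := by
  rcases eq_or_lt_of_le h with rfl | hc
  · rw [filter_true_of_mem fun i _ => i.isLt]
    simp
  · have : (univ.filter fun i : Fin m => (i : ℕ) < c) = Finset.Iio ⟨c, hc⟩ := by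
      ext i; simp [Fin.lt_def]
    rw [this, Fin.card_Iio]

lemma conjP_isPartition {N m : ℕ} (l : Fin N → ℕ) : IsPartition (conjP m l) := by
  intro i j hij
  apply card_le_card
  intro k hk
  simp only [mem_filter, mem_univ, true_and] at hk ⊢
  omega

lemma conjP_mono {N m : ℕ} {a b : Fin N → ℕ} (h : ∀ j, b j ≤ a j) (i : Fin m) :
    conjP m b i ≤ conjP m a i := by
  apply card_le_card
  intro k hk
  simp only [mem_filter, mem_univ, true_and] at hk ⊢
  exact le_trans hk (h k)

lemma conjP_le {N m : ℕ} (l : Fin N → ℕ) (i : Fin m) : conjP m l i ≤ N := by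
  simpa [conjP] using card_le_card (filter_subset _ (univ : Finset (Fin N)))

lemma conj_card_ge_iff {N : ℕ} {l : Fin N → ℕ} (hl : IsPartition l) (t : ℕ) (j : Fin N) :
    (j : ℕ) + 1 ≤ (univ.filter fun k => t ≤ l k).card ↔ t ≤ l j := by
  constructor
  · intro hc
    by_contra hn
    have hsub : (univ.filter fun k => t ≤ l k) ⊆ Finset.Iio j := by
      intro k hk
      simp only [mem_filter, mem_univ, true_and] at hk
      simp only [Finset.mem_Iio]
      by_contra hkj
      exact hn (le_trans hk (hl j k (le_of_not_gt hkj)))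
    have := card_le_card hsub
    rw [Fin.card_Iio] at this
    omega
  · intro ht
    have hsub : Finset.Iic j ⊆ (univ.filter fun k => t ≤ l k) := by
      intro k hk
      simp only [Finset.mem_Iic] at hk
      simp only [mem_filter, mem_univ, true_and]
      exact le_trans ht (hl k j hk)
    have := card_le_card hsub
    rwa [Fin.card_Iic] at this

lemma conj_conj {N m : ℕ} {l : Fin N → ℕ} (hl : IsPartition l) (hb : ∀ j, l j ≤ m) (j : Fin N) :
    conjP N (conjP m l) j = l j := by
  unfold conjP
  have : ∀ i : Fin m, ((j : ℕ) + 1 ≤ (univ.filter fun k => (i : ℕ) + 1 ≤ l k).card ↔ (i : ℕ) < l j) :=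
    fun i => by rw [conj_card_ge_iff hl]; omega
  rw [show (univ.filter fun i : Fin m => (j : ℕ) + 1 ≤ (univ.filter fun k : Fin N => (i : ℕ) + 1 ≤ l k).card)
      = (univ.filter fun i : Fin m => (i : ℕ) < l j) from filter_congr fun i _ => this i]
  exact card_filter_val_lt m (l j) (hb j)

lemma card_interlace {N : ℕ} {a b : Fin N → ℕ}
    (h : ∀ (j : ℕ) (hj : j + 1 < N), a ⟨j + 1, hj⟩ ≤ b ⟨j, by omega⟩) (t : ℕ) :
    (univ.filter fun j => t ≤ a j).card ≤ (univ.filter fun j => t ≤ b j).card + 1 := by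
  rcases Nat.eq_zero_or_pos N with rfl | hN
  · rw [Finset.univ_eq_empty]; simp
  set S := univ.filter fun j : Fin N => t ≤ a j with hS
  set T := univ.filter fun j : Fin N => t ≤ b j with hT
  set z : Fin N := ⟨0, hN⟩ with hz
  have hzv : (z : ℕ) = 0 := rfl
  have hmap : ∀ j ∈ S.erase z, (⟨(j : ℕ) - 1, by omega⟩ : Fin N) ∈ T := by
    intro j hj
    have hjz : j ≠ z := (Finset.mem_erase.mp hj).1
    have hjS : j ∈ S := (Finset.mem_erase.mp hj).2
    have hj1 : 1 ≤ (j : ℕ) := by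
      by_contra hc
      exact hjz (Fin.ext (by rw [hzv]; omega))
    simp only [hS, mem_filter, mem_univ, true_and] at hjS
    simp only [hT, mem_filter, mem_univ, true_and]
    have hlt : ((j : ℕ) - 1) + 1 < N := by omega
    have := h ((j : ℕ) - 1) hlt
    have heq : (⟨(j : ℕ) - 1 + 1, hlt⟩ : Fin N) = j := Fin.ext (by simp only [Fin.val_mk]; omega)
    rw [heq] at this
    exact le_trans hjS this
  have hinj : Set.InjOn (fun j : Fin N => (⟨(j : ℕ) - 1, by omega⟩ : Fin N)) (S.erase z) := by
    intro x hx y hy hxy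
    have hx1 : 1 ≤ (x : ℕ) := by
      by_contra hc; exact (Finset.mem_erase.mp hx).1 (Fin.ext (by rw [hzv]; omega))
    have hy1 : 1 ≤ (y : ℕ) := by
      by_contra hc; exact (Finset.mem_erase.mp hy).1 (Fin.ext (by rw [hzv]; omega))
    have := congrArg Fin.val hxy
    simp only at this
    exact Fin.ext (by omega)
  have h1 : (S.erase z).card ≤ T.card := Finset.card_le_card_of_injOn _ hmap hinj
  have h2 : S.card ≤ (S.erase z).card + 1 :=
    le_trans (card_le_card (Finset.subset_insert_iff.mpr Finset.Subset.rfl))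
      (Finset.card_insert_le _ _)
  omega

lemma hstrip_to_vstrip {N m : ℕ} {a b : Fin N → ℕ} (h : HStrip a b) :
    VStrip (conjP m a) (conjP m b) := by
  intro i
  exact ⟨conjP_mono h.1 i, card_interlace h.2 ((i : ℕ) + 1)⟩

lemma vstrip_to_hstrip {N m : ℕ} {a b : Fin N → ℕ} (ha : IsPartition a) (hb : IsPartition b)
    (hab : ∀ j, a j ≤ m) (hbb : ∀ j, b j ≤ m)
    (h : VStrip (conjP m a) (conjP m b)) : HStrip a b := by
  constructor
  · intro j
    have := conjP_mono (fun i => (h i).1) j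
    rwa [conj_conj hb hbb, conj_conj ha hab] at this
  · intro j hj
    set t := a ⟨j + 1, hj⟩ with ht
    rcases Nat.eq_zero_or_pos t with h0 | h1
    · omega
    have htm : t - 1 < m := by have := hab ⟨j + 1, hj⟩; omega
    set i : Fin m := ⟨t - 1, htm⟩ with hi
    have ha2 : j + 2 ≤ conjP m a i := by
      have := (conj_card_ge_iff ha ((i : ℕ) + 1) ⟨j + 1, hj⟩).mpr (by simp [hi]; omega)
      simp [conjP] at this ⊢; omega
    have hb2 : j + 1 ≤ conjP m b i := by
      have := (h i).2
      omega
    have := (conj_card_ge_iff hb ((i : ℕ) + 1) ⟨j, by omega⟩).mp (by simpa [conjP] using hb2)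
    simp only [hi] at this
    omega

lemma conj_compl {N m : ℕ} {l : Fin N → ℕ} (hb : ∀ j, l j ≤ m) :
    complP N (conjP m l) = conjP m (complP m l) := by
  funext i
  unfold complP conjP
  have hrev : (univ.filter fun j : Fin N => (i : ℕ) + 1 ≤ m - l j.rev).card
      = (univ.filter fun j : Fin N => (i : ℕ) + 1 ≤ m - l j).card := by
    rw [Finset.card_filter, Finset.card_filter]
    exact Fintype.sum_bijective Fin.rev Fin.rev_bijective _ _ (fun j => rfl)
  rw [hrev]
  have hcond : ∀ j : Fin N, ((i.rev : ℕ) + 1 ≤ l j ↔ ¬ ((i : ℕ) + 1 ≤ m - l j)) := by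
    intro j
    have h1 := hb j
    have h2 : (i.rev : ℕ) = m - ((i : ℕ) + 1) := Fin.val_rev i
    have h3 : (i : ℕ) < m := i.isLt
    omega
  have heq : (univ.filter fun j : Fin N => ((i.rev : ℕ) + 1 ≤ l j))
      = (univ.filter fun j : Fin N => ¬ ((i : ℕ) + 1 ≤ m - l j)) :=
    filter_congr fun j _ => hcond j
  have hsum := Finset.card_filter_add_card_filter_not
    (s := (univ : Finset (Fin N))) (p := fun j : Fin N => (i : ℕ) + 1 ≤ m - l j)
  rw [heq]
  rw [Finset.card_univ, Fintype.card_fin] at hsum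
  omega

lemma conj_extend {N m : ℕ} (l : Fin N → ℕ) :
    conjP m (extendP l) = conjP m l := by
  funext i
  unfold conjP extendP
  rw [Finset.card_filter, Finset.card_filter, Fin.sum_univ_castSucc]
  simp [Fin.snoc_castSucc, Fin.snoc_last]

lemma compl_isPartition {N m : ℕ} {l : Fin N → ℕ} (hl : IsPartition l) :
    IsPartition (complP m l) := by
  intro i j hij
  exact Nat.sub_le_sub_left (hl j.rev i.rev (Fin.rev_le_rev.mpr hij)) m

lemma extend_isPartition {N : ℕ} {l : Fin N → ℕ} (hl : IsPartition l) :
    IsPartition (extendP l) := by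
  intro i j hij
  unfold extendP
  rcases Fin.eq_castSucc_or_eq_last j with ⟨j', rfl⟩ | rfl
  · rcases Fin.eq_castSucc_or_eq_last i with ⟨i', rfl⟩ | rfl
    · rw [Fin.snoc_castSucc, Fin.snoc_castSucc]
      exact hl i' j' (by exact_mod_cast hij)
    · have h1 := Fin.le_def.mp hij
      have h2 := j'.isLt
      simp only [Fin.val_last, Fin.coe_castSucc] at h1
      omega
  · rw [Fin.snoc_last]
    exact Nat.zero_le _

lemma extend_le {N m : ℕ} {l : Fin N → ℕ} (h : ∀ j, l j ≤ m) : ∀ j, extendP l j ≤ m := by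
  intro j
  unfold extendP
  rcases Fin.eq_castSucc_or_eq_last j with ⟨j', rfl⟩ | rfl
  · rw [Fin.snoc_castSucc]; exact h j'
  · rw [Fin.snoc_last]; exact Nat.zero_le _

/-- For `λ ∈ Λ_{n+1}` with `λ ⊂ m^{n+1}` and `μ ∈ Λ_n` with `μ ⊂ m^n`:
there is a partition `ν ∈ Λ_m` with `ν ⊂ n^m − μ′`, `ν ⊂ (n+1)^m − λ′` such that
`(n^m − μ′)/ν` and `((n+1)^m − λ′)/ν` are vertical strips, iff there is `κ ∈ Λ_n` such
that `(m^n − μ)/κ` and `(m^{n+1} − λ)/κ` (with `κ ∈ Λ_{n+1}`) are horizontal strips. -/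
theorem statement11 (m n : ℕ) (lam : Fin (n + 1) → ℕ) (hlam : IsPartition lam)
    (hlamb : SubDiag lam (rectP m (n + 1)))
    (mu : Fin n → ℕ) (hmu : IsPartition mu) (hmub : SubDiag mu (rectP m n)) :
    (∃ nu : Fin m → ℕ, IsPartition nu ∧
        SubDiag nu (complP n (conjP m mu)) ∧
        SubDiag nu (complP (n + 1) (conjP m lam)) ∧
        VStrip (complP n (conjP m mu)) nu ∧
        VStrip (complP (n + 1) (conjP m lam)) nu) ↔
      (∃ kap : Fin n → ℕ, IsPartition kap ∧
        HStrip (complP m mu) kap ∧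
        HStrip (complP m lam) (extendP kap)) := by
  have hlm : ∀ j, lam j ≤ m := fun j => hlamb j
  have hmm : ∀ j, mu j ≤ m := fun j => hmub j
  have hA : IsPartition (complP m mu) := compl_isPartition hmu
  have hB : IsPartition (complP m lam) := compl_isPartition hlam
  have hAb : ∀ j, complP m mu j ≤ m := fun j => Nat.sub_le _ _
  have hBb : ∀ j, complP m lam j ≤ m := fun j => Nat.sub_le _ _
  have eA : complP n (conjP m mu) = conjP m (complP m mu) := conj_compl hmm
  have eB : complP (n + 1) (conjP m lam) = conjP m (complP m lam) := conj_compl hlm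
  constructor
  · rintro ⟨nu, hnu, hs1, hs2, hv1, hv2⟩
    have hnub : ∀ i, nu i ≤ n := fun i => le_trans (hs1 i) (Nat.sub_le _ _)
    have hcc : conjP m (conjP n nu) = nu := funext (conj_conj hnu hnub)
    have hkb : ∀ j, conjP n nu j ≤ m := fun j => conjP_le nu j
    refine ⟨conjP n nu, conjP_isPartition nu, ?_, ?_⟩
    · apply vstrip_to_hstrip hA (conjP_isPartition nu) hAb hkb
      rw [hcc, ← eA]; exact hv1
    · apply vstrip_to_hstrip hB (extend_isPartition (conjP_isPartition nu)) hBb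
        (extend_le hkb)
      rw [conj_extend, hcc, ← eB]; exact hv2
  · rintro ⟨kap, hkap, h1, h2⟩
    have hv1 : VStrip (complP n (conjP m mu)) (conjP m kap) := by
      rw [eA]; exact hstrip_to_vstrip h1
    have hv2 : VStrip (complP (n + 1) (conjP m lam)) (conjP m kap) := by
      rw [eB]
      have h := hstrip_to_vstrip (m := m) h2
      rwa [conj_extend] at h
    exact ⟨conjP m kap, conjP_isPartition kap, fun i => (hv1 i).1, fun i => (hv2 i).1,
      hv1, hv2⟩
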